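/- Let V = (V_k, E_k) be a regular vine on a set with d elements. For every edge e ∈ E_k, the complete union U_e of e has exactly k + 1 elements. -/

import Mathlib

open Finset

variable {α : Type*} [DecidableEq α] [Fintype α]

/-- The simple graph on `α` induced by a finite set of unordered pairs. -/
def graphOf (E : Finset (Sym2 α)) : SimpleGraph α where
  Adj x y := x ≠ y ∧ s(x, y) ∈ E
  symm := by
    constructor
    intro x y h
    refine ⟨h.1.symm, ?_⟩
    rw [Sym2.eq_swap]
    exact h.2
  loopless := ⟨fun x h => h.1 rfl⟩

/-- `(V, E)` is a finite tree: edges join distinct vertices of `V`, the induced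
graph is acyclic, and all vertices of `V` are mutually reachable. -/
def IsTreeOn (V : Finset α) (E : Finset (Sym2 α)) : Prop :=
  (∀ e ∈ E, ∀ x ∈ e, x ∈ V) ∧ (∀ e ∈ E, ¬ e.IsDiag) ∧
    (graphOf E).IsAcyclic ∧ ∀ x ∈ V, ∀ y ∈ V, (graphOf E).Reachable x y

/-- Complete union of an edge: the union of the complete unions of its endpoints
(each vertex of a tree of the vine is identified with its complete union). -/
def eUnion (e : Sym2 (Finset α)) : Finset α :=
  Sym2.lift ⟨fun A B => A ∪ B, fun A B => union_comm A B⟩ e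

/-- Conditioning set `D_e` of an edge. -/
def condSet (e : Sym2 (Finset α)) : Finset α :=
  Sym2.lift ⟨fun A B => A ∩ B, fun A B => inter_comm A B⟩ e

/-- Conditioned set `{a_e, b_e}` of an edge. -/
def condPair (e : Sym2 (Finset α)) : Finset α :=
  Sym2.lift ⟨fun A B => symmDiff A B, fun A B => symmDiff_comm A B⟩ e

/-- A regular vine on a finite set `α` of `d = Fintype.card α` elements.  The
vertices of tree `k` (for `k = 1, …, d-1`) are identified with their complete
unions, subsets of `α`; `V (k+1) = E k` is expressed via complete unions. -/
structure RegularVine (α : Type*) [DecidableEq α] [Fintype α] where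
  V : ℕ → Finset (Finset α)
  E : ℕ → Finset (Sym2 (Finset α))
  hV1 : V 1 = Finset.univ.image (fun a : α => ({a} : Finset α))
  hVsucc : ∀ k, 1 ≤ k → V (k + 1) = (E k).image eUnion
  tree : ∀ k, 1 ≤ k → k + 1 ≤ Fintype.card α → IsTreeOn (V k) (E k)
  hEzero : ∀ k, k = 0 ∨ Fintype.card α ≤ k → E k = ∅
  proximity : ∀ k, 1 ≤ k → ∀ p ∈ E (k + 1),
    ∃ a ∈ E k, ∃ b ∈ E k, p = s(eUnion a, eUnion b) ∧ ∃ v, v ∈ a ∧ v ∈ b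

/-- A tree `(V, E)` is a path: it is a tree and every vertex has degree at most 2. -/
def IsPathOn (V : Finset α) (E : Finset (Sym2 α)) : Prop :=
  IsTreeOn V E ∧ ∀ v ∈ V, (E.filter (fun e => v ∈ e)).card ≤ 2

/-- A permutation `(i_1, …, i_d) = (σ 0, …, σ (d-1))` is compatible with a vine on
`Fin d`: for every `k` there is an edge of tree `k` with conditioned set
`{σ k, σ r}` (some `r < k`) and conditioning set `{σ 0, …, σ (k-1)} \ {σ r}`. -/
def Compatible {d : ℕ} (𝒱 : RegularVine (Fin d)) (σ : Fin d → Fin d) : Prop :=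
  ∀ k : Fin d, 1 ≤ (k : ℕ) → ∃ r : Fin d, r < k ∧ ∃ e ∈ 𝒱.E (k : ℕ),
    condPair e = {σ k, σ r} ∧
    condSet e = ((Finset.univ.filter (fun s : Fin d => s < k)).image σ).erase (σ r)


theorem vine_aux {d : ℕ} (𝒱 : RegularVine (Fin d)) :
    ∀ k, 1 ≤ k → k ≤ d - 1 →
      (∀ A ∈ 𝒱.V k, A.card = k) ∧ ∀ e ∈ 𝒱.E k, (eUnion e).card = k + 1 := by
  intro k
  induction k with
  | zero => omega
  | succ k ih =>
    intro _ hk1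
    have hcard : Fintype.card (Fin d) = d := Fintype.card_fin d
    by_cases hk : 1 ≤ k
    · have hkd : k ≤ d - 1 := by omega
      obtain ⟨ihV, ihE⟩ := ih hk hkd
      have hd2 : k + 1 + 1 ≤ d := by omega
      have htk := 𝒱.tree k hk (by omega)
      have htk1 := 𝒱.tree (k + 1) (by omega) (by omega)
      have hVert : ∀ A ∈ 𝒱.V (k + 1), A.card = k + 1 := by
        intro A hA
        rw [𝒱.hVsucc k hk] at hA
        obtain ⟨e, he, rfl⟩ := mem_image.mp hA
        exact ihE e he
      refine ⟨hVert, ?_⟩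
      intro e he
      obtain ⟨a, ha, b, hb, hpe, v, hva, hvb⟩ := 𝒱.proximity k hk e he
      have hdiag : ¬ e.IsDiag := htk1.2.1 e he
      subst hpe
      have hne : eUnion a ≠ eUnion b := by
        simpa [Sym2.mk_isDiag_iff] using hdiag
      set w := Sym2.Mem.other hva with hw
      set u := Sym2.Mem.other hvb with hu
      have haw : s(v, w) = a := Sym2.other_spec hva
      have hbu : s(v, u) = b := Sym2.other_spec hvb
      have hav : eUnion a = v ∪ w := by rw [← haw]; rfl
      have hbv : eUnion b = v ∪ u := by rw [← hbu]; rfl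
      have hvV : v ∈ 𝒱.V k := htk.1 a ha v hva
      have hwV : w ∈ 𝒱.V k := htk.1 a ha w (by rw [← haw]; exact Sym2.mem_mk_right v w)
      have huV : u ∈ 𝒱.V k := htk.1 b hb u (by rw [← hbu]; exact Sym2.mem_mk_right v u)
      have hvc : v.card = k := ihV v hvV
      have huc : u.card = k := ihV u huV
      have hac : (v ∪ w).card = k + 1 := by rw [← hav]; exact ihE a ha
      have hbc : (v ∪ u).card = k + 1 := by rw [← hbv]; exact ihE b hb
      have husv : (u \ v).card = 1 := by
        have := Finset.card_sdiff_add_card (s := u) (t := v)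
        rw [union_comm] at this
        omega
      by_cases hsub : u ⊆ v ∪ w
      · exfalso
        have hsub2 : v ∪ u ⊆ v ∪ w := union_subset (subset_union_left) hsub
        have : v ∪ u = v ∪ w := Finset.eq_of_subset_of_card_le hsub2 (by omega)
        rw [hav, hbv] at hne
        exact hne this.symm
      · have hne2 : (u \ (v ∪ w)).Nonempty := by
          rw [Finset.sdiff_nonempty]
          exact hsub
        have hle : (u \ (v ∪ w)).card ≤ 1 := by
          rw [← husv]
          exact Finset.card_le_card (Finset.sdiff_subset_sdiff le_rfl subset_union_left)
        have heq1 : (u \ (v ∪ w)).card = 1 := by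
          have := Finset.card_pos.mpr hne2
          omega
        have hsetEq : eUnion s(eUnion a, eUnion b) = (v ∪ w) ∪ u := by
          show eUnion a ∪ eUnion b = (v ∪ w) ∪ u
          rw [hav, hbv]
          ext x
          simp only [mem_union]
          tauto
        rw [hsetEq, union_comm (v ∪ w) u]
        have := Finset.card_sdiff_add_card (s := u) (t := v ∪ w)
        omega
    · have hk0 : k = 0 := by omega
      subst hk0
      have htk1 := 𝒱.tree 1 le_rfl (by omega)
      have hVert : ∀ A ∈ 𝒱.V 1, A.card = 1 := by
        intro A hA
        rw [𝒱.hV1] at hA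
        obtain ⟨a, _, rfl⟩ := mem_image.mp hA
        exact Finset.card_singleton a
      refine ⟨hVert, ?_⟩
      intro e he
      have hdiag : ¬ e.IsDiag := htk1.2.1 e he
      induction e using Sym2.inductionOn with
      | hf A B =>
        have hA : A ∈ 𝒱.V 1 := htk1.1 _ he A (Sym2.mem_mk_left A B)
        have hB : B ∈ 𝒱.V 1 := htk1.1 _ he B (Sym2.mem_mk_right A B)
        have hne : A ≠ B := by simpa [Sym2.mk_isDiag_iff] using hdiag
        have hAc : A.card = 1 := hVert A hA
        have hBc : B.card = 1 := hVert B hB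
        have : (eUnion s(A, B)) = A ∪ B := rfl
        rw [this]
        obtain ⟨a, rfl⟩ := Finset.card_eq_one.mp hAc
        obtain ⟨b, rfl⟩ := Finset.card_eq_one.mp hBc
        have hab : a ≠ b := fun h => hne (by rw [h])
        have hdisj : Disjoint ({a} : Finset (Fin d)) {b} :=
          Finset.disjoint_singleton.mpr hab
        rw [Finset.card_union_of_disjoint hdisj]
        simp

/-- For every edge `e ∈ E_k` of a regular vine on `d` elements, the complete union
`U_e` of `e` has exactly `k + 1` elements. -/
theorem vine_completeUnion_card {d : ℕ} (𝒱 : RegularVine (Fin d)) :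
    ∀ k, 1 ≤ k → k ≤ d - 1 → ∀ e ∈ 𝒱.E k, (eUnion e).card = k + 1 := by
  intro k hk1 hkd
  exact (vine_aux 𝒱 k hk1 hkd).2
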